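/- arXiv:1812.01437 — 2 statements merged into one kernel-verified Lean document; each statement's English description precedes it below -/
import Mathlib

section
/- Let F_l(z_l) = D_l + C_l(z_lI_{n_l} − A_l)^{-1}B_l be a realization of a p_l×m_l rational function and F_r(z_r) = D_r + C_r(z_rI_{n_r} − A_r)^{-1}B_r a realization of a p_r×m_r rational function. Define the inflated matrices 𝐀_l = A_l ⊗ I_{p_r}, 𝐁_l = B_l ⊗ I_{p_r}, 𝐂_l = C_l ⊗ I_{p_r}, 𝐃_l = D_l ⊗ I_{p_r}, 𝐀_r = I_{m_l} ⊗ A_r, 𝐁_r = I_{m_l} ⊗ B_r, 𝐂_r = I_{m_l} ⊗ C_r, 𝐃_r = I_{m_l} ⊗ D_r. Then for all z_l, z_r ∈ ℂ with z_lI_{n_l} − A_l and z_rI_{n_r} − A_r invertible: F_l(z_l) ⊗ F_r(z_r) = 𝐃_l𝐃_r + [𝐂_l 𝐃_l𝐂_r] · ( diag(z_lI_{n_lp_r}, z_rI_{m_ln_r}) − [[𝐀_l, 𝐁_l𝐂_r],[0, 𝐀_r]] )^{-1} · [𝐁_l𝐃_r ; 𝐁_r], where the block 2×2 matrix in the resolvent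 is invertible and 𝐃_l𝐃_r = D_l ⊗ D_r. -/
open Matrix
open scoped Kronecker

private lemma sub_kronecker' {l m n p : Type*} (A B : Matrix l m ℂ) (C : Matrix n p ℂ) :
    (A - B) ⊗ₖ C = A ⊗ₖ C - B ⊗ₖ C := by
  ext ⟨i, j⟩ ⟨k, r⟩
  simp [Matrix.kroneckerMap_apply, sub_mul]

private lemma kronecker_sub' {l m n p : Type*} (A : Matrix l m ℂ) (B C : Matrix n p ℂ) :
    A ⊗ₖ (B - C) = A ⊗ₖ B - A ⊗ₖ C := by
  ext ⟨i, j⟩ ⟨k, r⟩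
  simp [Matrix.kroneckerMap_apply, mul_sub]

private lemma fromBlocks_sub' {l m n o : Type*} (A A' : Matrix n l ℂ) (B B' : Matrix n m ℂ)
    (C C' : Matrix o l ℂ) (D D' : Matrix o m ℂ) :
    fromBlocks A B C D - fromBlocks A' B' C' D'
      = fromBlocks (A - A') (B - B') (C - C') (D - D') := by
  simp only [sub_eq_add_neg, Matrix.fromBlocks_neg, Matrix.fromBlocks_add]

/-- Realization of the tensor (Kronecker) product of two rational functions in terms of the
"inflated" realization matrices `𝐀_l = A_l ⊗ I, 𝐁_l = B_l ⊗ I, …, 𝐀_r = I ⊗ A_r, …`: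
`F_l(z_l) ⊗ F_r(z_r) = 𝐃_l𝐃_r + [𝐂_l  𝐃_l𝐂_r] (diag(z_lI, z_rI) − [[𝐀_l, 𝐁_l𝐂_r],[0, 𝐀_r]])⁻¹ [𝐁_l𝐃_r ; 𝐁_r]`,
the block matrix in the resolvent being invertible and `𝐃_l𝐃_r = D_l ⊗ D_r`. -/
theorem realization_of_tensor_product (nl nr ml mr pl pr : ℕ)
    (Al : Matrix (Fin nl) (Fin nl) ℂ) (Bl : Matrix (Fin nl) (Fin ml) ℂ)
    (Cl : Matrix (Fin pl) (Fin nl) ℂ) (Dl : Matrix (Fin pl) (Fin ml) ℂ)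
    (Ar : Matrix (Fin nr) (Fin nr) ℂ) (Br : Matrix (Fin nr) (Fin mr) ℂ)
    (Cr : Matrix (Fin pr) (Fin nr) ℂ) (Dr : Matrix (Fin pr) (Fin mr) ℂ)
    (zl zr : ℂ)
    (hl : IsUnit (zl • (1 : Matrix (Fin nl) (Fin nl) ℂ) - Al))
    (hr : IsUnit (zr • (1 : Matrix (Fin nr) (Fin nr) ℂ) - Ar)) :
    let bAl := Al ⊗ₖ (1 : Matrix (Fin pr) (Fin pr) ℂ)
    let bBl := Bl ⊗ₖ (1 : Matrix (Fin pr) (Fin pr) ℂ)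
    let bCl := Cl ⊗ₖ (1 : Matrix (Fin pr) (Fin pr) ℂ)
    let bDl := Dl ⊗ₖ (1 : Matrix (Fin pr) (Fin pr) ℂ)
    let bAr := (1 : Matrix (Fin ml) (Fin ml) ℂ) ⊗ₖ Ar
    let bBr := (1 : Matrix (Fin ml) (Fin ml) ℂ) ⊗ₖ Br
    let bCr := (1 : Matrix (Fin ml) (Fin ml) ℂ) ⊗ₖ Cr
    let bDr := (1 : Matrix (Fin ml) (Fin ml) ℂ) ⊗ₖ Dr
    IsUnit (fromBlocks (zl • 1) 0 0 (zr • 1) - fromBlocks bAl (bBl * bCr) 0 bAr) ∧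
    bDl * bDr = Dl ⊗ₖ Dr ∧
    (Dl + Cl * (zl • 1 - Al)⁻¹ * Bl) ⊗ₖ (Dr + Cr * (zr • 1 - Ar)⁻¹ * Br)
      = bDl * bDr +
        fromCols bCl (bDl * bCr) *
          (fromBlocks (zl • 1) 0 0 (zr • 1) - fromBlocks bAl (bBl * bCr) 0 bAr)⁻¹ *
          fromRows (bBl * bDr) bBr := by
  intro bAl bBl bCl bDl bAr bBr bCr bDr
  set Xl := zl • (1 : Matrix (Fin nl) (Fin nl) ℂ) - Al with hXl
  set Xr := zr • (1 : Matrix (Fin nr) (Fin nr) ℂ) - Ar with hXr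
  have h1 : zl • (1 : Matrix (Fin nl × Fin pr) (Fin nl × Fin pr) ℂ) - bAl
      = Xl ⊗ₖ (1 : Matrix (Fin pr) (Fin pr) ℂ) := by
    rw [hXl, sub_kronecker', smul_kronecker, one_kronecker_one]
  have h2 : zr • (1 : Matrix (Fin ml × Fin nr) (Fin ml × Fin nr) ℂ) - bAr
      = (1 : Matrix (Fin ml) (Fin ml) ℂ) ⊗ₖ Xr := by
    rw [hXr, kronecker_sub', kronecker_smul, one_kronecker_one]
  have hblock : fromBlocks (zl • 1) 0 0 (zr • 1) - fromBlocks bAl (bBl * bCr) 0 bAr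
      = fromBlocks (Xl ⊗ₖ (1 : Matrix (Fin pr) (Fin pr) ℂ))
          (-(bBl * bCr)) 0 ((1 : Matrix (Fin ml) (Fin ml) ℂ) ⊗ₖ Xr) := by
    rw [fromBlocks_sub', zero_sub, sub_zero, h1, h2]
  have hP : IsUnit (Xl ⊗ₖ (1 : Matrix (Fin pr) (Fin pr) ℂ)) := by
    rw [Matrix.isUnit_iff_isUnit_det, det_kronecker, det_one, one_pow, mul_one]
    exact (Matrix.isUnit_iff_isUnit_det _).mp hl |>.pow _
  have hR : IsUnit ((1 : Matrix (Fin ml) (Fin ml) ℂ) ⊗ₖ Xr) := by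
    rw [Matrix.isUnit_iff_isUnit_det, det_kronecker, det_one, one_pow, one_mul]
    exact (Matrix.isUnit_iff_isUnit_det _).mp hr |>.pow _
  refine ⟨?_, ?_, ?_⟩
  · rw [hblock]
    exact isUnit_fromBlocks_zero₂₁.mpr ⟨hP, hR⟩
  · rw [← mul_kronecker_mul, Matrix.mul_one, Matrix.one_mul]
  · rw [hblock, inv_fromBlocks_zero₂₁_of_isUnit_iff _ _ _ (iff_of_true hP hR),
      inv_kronecker, inv_kronecker, inv_one, fromCols_mul_fromBlocks,
      fromCols_mul_fromRows]
    simp only [bAl, bBl, bCl, bDl, bAr, bBr, bCr, bDr, ← mul_kronecker_mul,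
      Matrix.mul_one, Matrix.one_mul, Matrix.mul_zero, Matrix.zero_mul, inv_one,
      Matrix.mul_neg, Matrix.neg_mul, neg_neg, add_zero, zero_add,
      kronecker_add, add_kronecker, Matrix.add_mul, Matrix.mul_add]
    ring_nf
    simp only [Matrix.mul_one, inv_one, Matrix.mul_assoc]
    abel
end

section
/- Let A_l ∈ ℂ^{n_l×n_l}, B_l ∈ ℂ^{n_l×m_l}, C_l ∈ ℂ^{m_l×n_l} and A_r ∈ ℂ^{n_r×n_r}, B_r ∈ ℂ^{n_r×m_r}, C_r ∈ ℂ^{m_r×n_r}, and set F_r(z) = I_{m_r} + C_r(zI_{n_r} − A_r)^{-1}B_r. Define the inflated realization matrices 𝐀_o = [[A_l ⊗ I_{m_r}, (B_l ⊗ I_{m_r})(I_{m_l} ⊗ C_r)],[0, I_{m_l} ⊗ A_r]], 𝐁_o = [B_l ⊗ I_{m_r} ; I_{m_l} ⊗ B_r], 𝐂_o = [C_l ⊗ I_{m_r} I_{m_l} ⊗ C_r]. Let T ∈ ℂ^{(n_lm_r+m_ln_r)×(n_lm_r+m_ln_r)} be invertible and set 𝐀 = T^{-1}𝐀_oT, 𝐁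 = T^{-1}𝐁_o, 𝐂 = 𝐂_oT. Let v ∈ ℂ^{m_l} with v*v = 1 and define Π̂ = T^{-1} diag(0_{n_lm_r}, vv* ⊗ I_{n_r}) T. Then for every z ∈ ℂ such that zI_{n_l} − A_l and zI_{n_r} − A_r are invertible, zI_{n_lm_r+m_ln_r} − 𝐀 is invertible and F_r(z) = (v* ⊗ I_{m_r}) 𝐂 Π̂ (zI_{n_lm_r+m_ln_r} − 𝐀)^{-1} Π̂ 𝐁 (v ⊗ I_{m_r}) + I_{m_r}. -/
open Matrix
open scoped Kronecker


private lemma sub_kron {l n : Type*} [Fintype l] [Fintype n] [DecidableEq l] [DecidableEq n]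
    (X Y : Matrix l l ℂ) (B : Matrix n n ℂ) :
    (X - Y) ⊗ₖ B = X ⊗ₖ B - Y ⊗ₖ B := by
  ext ⟨i, j⟩ ⟨k, r⟩
  simp [Matrix.kroneckerMap_apply, sub_mul]

private lemma kron_sub {l n : Type*} [Fintype l] [Fintype n] [DecidableEq l] [DecidableEq n]
    (A : Matrix l l ℂ) (X Y : Matrix n n ℂ) :
    A ⊗ₖ (X - Y) = A ⊗ₖ X - A ⊗ₖ Y := by
  ext ⟨i, j⟩ ⟨k, r⟩
  simp [Matrix.kroneckerMap_apply, mul_sub]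

private lemma reindex_one_kron {p q : Type*} [Fintype p] [Fintype q] [DecidableEq p] [DecidableEq q]
    (W : Matrix p q ℂ) :
    Matrix.reindex (Equiv.uniqueProd p (Fin 1)) (Equiv.uniqueProd q (Fin 1))
      ((1 : Matrix (Fin 1) (Fin 1) ℂ) ⊗ₖ W) = W := by
  ext i j
  simp [Matrix.reindex_apply, Matrix.submatrix_apply, Equiv.uniqueProd, Matrix.one_apply]

/-- Recovery of the right tensor factor from a (coordinate-transformed) realization of the
tensor product: with `𝐀 = T⁻¹𝐀_o T`, `𝐁 = T⁻¹𝐁_o`, `𝐂 = 𝐂_o T` built from the inflated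
realization of `F_l ⊗ F_r` (normalized so `D_l = I`, `D_r = I`), a unit vector `v ∈ ℂ^{m_l}`
and `Π̂ = T⁻¹ diag(0, vv* ⊗ I_{n_r}) T`, for every `z` where `zI − A_l` and `zI − A_r` are
invertible, `zI − 𝐀` is invertible and
`F_r(z) = (v* ⊗ I) 𝐂 Π̂ (zI − 𝐀)⁻¹ Π̂ 𝐁 (v ⊗ I) + I`. -/
theorem recover_right_factor (nl nr ml mr : ℕ)
    (Al : Matrix (Fin nl) (Fin nl) ℂ) (Bl : Matrix (Fin nl) (Fin ml) ℂ)
    (Cl : Matrix (Fin ml) (Fin nl) ℂ)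
    (Ar : Matrix (Fin nr) (Fin nr) ℂ) (Br : Matrix (Fin nr) (Fin mr) ℂ)
    (Cr : Matrix (Fin mr) (Fin nr) ℂ)
    (T : Matrix ((Fin nl × Fin mr) ⊕ (Fin ml × Fin nr))
        ((Fin nl × Fin mr) ⊕ (Fin ml × Fin nr)) ℂ) (hT : IsUnit T)
    (v : Matrix (Fin ml) (Fin 1) ℂ) (hv : vᴴ * v = 1)
    (z : ℂ)
    (hl : IsUnit (z • (1 : Matrix (Fin nl) (Fin nl) ℂ) - Al))
    (hr : IsUnit (z • (1 : Matrix (Fin nr) (Fin nr) ℂ) - Ar)) :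
    let Ao := fromBlocks (Al ⊗ₖ (1 : Matrix (Fin mr) (Fin mr) ℂ))
        ((Bl ⊗ₖ (1 : Matrix (Fin mr) (Fin mr) ℂ)) * ((1 : Matrix (Fin ml) (Fin ml) ℂ) ⊗ₖ Cr))
        0 ((1 : Matrix (Fin ml) (Fin ml) ℂ) ⊗ₖ Ar)
    let Bo := fromRows (Bl ⊗ₖ (1 : Matrix (Fin mr) (Fin mr) ℂ))
        ((1 : Matrix (Fin ml) (Fin ml) ℂ) ⊗ₖ Br)
    let Co := fromCols (Cl ⊗ₖ (1 : Matrix (Fin mr) (Fin mr) ℂ))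
        ((1 : Matrix (Fin ml) (Fin ml) ℂ) ⊗ₖ Cr)
    let A := T⁻¹ * Ao * T
    let B := T⁻¹ * Bo
    let C := Co * T
    let Ph := T⁻¹ * fromBlocks (0 : Matrix (Fin nl × Fin mr) (Fin nl × Fin mr) ℂ) 0 0
        ((v * vᴴ) ⊗ₖ (1 : Matrix (Fin nr) (Fin nr) ℂ)) * T
    IsUnit (z • (1 : Matrix ((Fin nl × Fin mr) ⊕ (Fin ml × Fin nr))
        ((Fin nl × Fin mr) ⊕ (Fin ml × Fin nr)) ℂ) - A) ∧
    1 + Cr * (z • 1 - Ar)⁻¹ * Br =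
      Matrix.reindex (Equiv.uniqueProd (Fin mr) (Fin 1)) (Equiv.uniqueProd (Fin mr) (Fin 1))
        ((vᴴ ⊗ₖ (1 : Matrix (Fin mr) (Fin mr) ℂ)) * C * Ph *
          (z • 1 - A)⁻¹ * Ph * B * (v ⊗ₖ (1 : Matrix (Fin mr) (Fin mr) ℂ))) + 1 := by
  intro Ao Bo Co A B C Ph
  set M11 : Matrix (Fin nl × Fin mr) (Fin nl × Fin mr) ℂ :=
    (z • 1 - Al) ⊗ₖ (1 : Matrix (Fin mr) (Fin mr) ℂ) with hM11
  set M22 : Matrix (Fin ml × Fin nr) (Fin ml × Fin nr) ℂ :=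
    (1 : Matrix (Fin ml) (Fin ml) ℂ) ⊗ₖ (z • 1 - Ar) with hM22
  set X : Matrix (Fin nl × Fin mr) (Fin ml × Fin nr) ℂ :=
    (Bl ⊗ₖ (1 : Matrix (Fin mr) (Fin mr) ℂ)) * ((1 : Matrix (Fin ml) (Fin ml) ℂ) ⊗ₖ Cr) with hX
  set Q : Matrix (Fin ml × Fin nr) (Fin ml × Fin nr) ℂ :=
    (v * vᴴ) ⊗ₖ (1 : Matrix (Fin nr) (Fin nr) ℂ) with hQ
  have hTdet : IsUnit T.det := (Matrix.isUnit_iff_isUnit_det T).mp hT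
  have hTiT : T⁻¹ * T = 1 := Matrix.nonsing_inv_mul T hTdet
  have hTTi : T * T⁻¹ = 1 := Matrix.mul_nonsing_inv T hTdet
  have cancel : ∀ {p : Type} (x : Matrix ((Fin nl × Fin mr) ⊕ (Fin ml × Fin nr)) p ℂ),
      T * (T⁻¹ * x) = x := fun x => by rw [← Matrix.mul_assoc, hTTi, Matrix.one_mul]
  have hM11unit : IsUnit M11 := by
    rw [hM11, Matrix.isUnit_iff_isUnit_det, Matrix.det_kronecker]
    simpa using ((Matrix.isUnit_iff_isUnit_det _).mp hl).pow _
  have hM22unit : IsUnit M22 := by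
    rw [hM22, Matrix.isUnit_iff_isUnit_det, Matrix.det_kronecker]
    simpa using ((Matrix.isUnit_iff_isUnit_det _).mp hr).pow _
  have key : z • (1 : Matrix ((Fin nl × Fin mr) ⊕ (Fin ml × Fin nr))
      ((Fin nl × Fin mr) ⊕ (Fin ml × Fin nr)) ℂ) - Ao = fromBlocks M11 (-X) 0 M22 := by
    have e11 : z • (1 : Matrix (Fin nl × Fin mr) (Fin nl × Fin mr) ℂ) -
        Al ⊗ₖ (1 : Matrix (Fin mr) (Fin mr) ℂ) = M11 := by
      rw [hM11, sub_kron, Matrix.smul_kronecker, Matrix.one_kronecker_one]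
    have e22 : z • (1 : Matrix (Fin ml × Fin nr) (Fin ml × Fin nr) ℂ) -
        (1 : Matrix (Fin ml) (Fin ml) ℂ) ⊗ₖ Ar = M22 := by
      rw [hM22, kron_sub, Matrix.kronecker_smul, Matrix.one_kronecker_one]
    show z • (1 : Matrix ((Fin nl × Fin mr) ⊕ (Fin ml × Fin nr))
        ((Fin nl × Fin mr) ⊕ (Fin ml × Fin nr)) ℂ) -
      fromBlocks (Al ⊗ₖ (1 : Matrix (Fin mr) (Fin mr) ℂ)) X 0
        ((1 : Matrix (Fin ml) (Fin ml) ℂ) ⊗ₖ Ar) = _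
    rw [← Matrix.fromBlocks_one, Matrix.fromBlocks_smul, sub_eq_add_neg,
      Matrix.fromBlocks_neg, Matrix.fromBlocks_add]
    simp only [smul_zero, zero_add, neg_zero, add_zero, ← sub_eq_add_neg, zero_sub]
    rw [e11, e22]
  have hMunit : IsUnit (fromBlocks M11 (-X) 0 M22) :=
    Matrix.isUnit_fromBlocks_zero₂₁.mpr ⟨hM11unit, hM22unit⟩
  have hconj : z • (1 : Matrix ((Fin nl × Fin mr) ⊕ (Fin ml × Fin nr))
      ((Fin nl × Fin mr) ⊕ (Fin ml × Fin nr)) ℂ) - A = T⁻¹ * (fromBlocks M11 (-X) 0 M22) * T := by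
    rw [← key, Matrix.mul_sub, Matrix.sub_mul, Matrix.mul_smul, Matrix.mul_one,
      Matrix.smul_mul, hTiT]
  have hAunit : IsUnit (z • (1 : Matrix ((Fin nl × Fin mr) ⊕ (Fin ml × Fin nr))
      ((Fin nl × Fin mr) ⊕ (Fin ml × Fin nr)) ℂ) - A) := by
    rw [hconj]
    exact ((Matrix.isUnit_nonsing_inv_iff.mpr hT).mul hMunit).mul hT
  refine ⟨hAunit, ?_⟩
  have hMdet : IsUnit (fromBlocks M11 (-X) 0 M22).det :=
    (Matrix.isUnit_iff_isUnit_det _).mp hMunit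
  have hAinv : (z • (1 : Matrix ((Fin nl × Fin mr) ⊕ (Fin ml × Fin nr))
      ((Fin nl × Fin mr) ⊕ (Fin ml × Fin nr)) ℂ) - A)⁻¹
      = T⁻¹ * (fromBlocks M11 (-X) 0 M22)⁻¹ * T := by
    rw [hconj, Matrix.mul_inv_rev, Matrix.mul_inv_rev, Matrix.nonsing_inv_nonsing_inv T hTdet,
      ← Matrix.mul_assoc]
  have hMinv : (fromBlocks M11 (-X) 0 M22)⁻¹
      = fromBlocks M11⁻¹ (-(M11⁻¹ * (-X) * M22⁻¹)) 0 M22⁻¹ :=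
    Matrix.inv_fromBlocks_zero₂₁_of_isUnit_iff _ _ _ (iff_of_true hM11unit hM22unit)
  have hM22inv : M22⁻¹ = (1 : Matrix (Fin ml) (Fin ml) ℂ) ⊗ₖ (z • 1 - Ar)⁻¹ := by
    rw [hM22, Matrix.inv_kronecker, inv_one]
  have hvv : (v * vᴴ) * v = v := by rw [Matrix.mul_assoc, hv, Matrix.mul_one]
  have main : (vᴴ ⊗ₖ (1 : Matrix (Fin mr) (Fin mr) ℂ)) * C * Ph *
      (z • (1 : Matrix ((Fin nl × Fin mr) ⊕ (Fin ml × Fin nr))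
        ((Fin nl × Fin mr) ⊕ (Fin ml × Fin nr)) ℂ) - A)⁻¹ * Ph * B *
      (v ⊗ₖ (1 : Matrix (Fin mr) (Fin mr) ℂ))
      = (1 : Matrix (Fin 1) (Fin 1) ℂ) ⊗ₖ (Cr * ((z • 1 - Ar)⁻¹ * Br)) := by
    rw [hAinv]
    show (vᴴ ⊗ₖ (1 : Matrix (Fin mr) (Fin mr) ℂ)) * (Co * T) *
        (T⁻¹ * fromBlocks 0 0 0 Q * T) * (T⁻¹ * (fromBlocks M11 (-X) 0 M22)⁻¹ * T) *
        (T⁻¹ * fromBlocks 0 0 0 Q * T) * (T⁻¹ * Bo) *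
        (v ⊗ₖ (1 : Matrix (Fin mr) (Fin mr) ℂ)) = _
    simp only [Matrix.mul_assoc, cancel]
    rw [hMinv]
    show (vᴴ ⊗ₖ (1 : Matrix (Fin mr) (Fin mr) ℂ)) *
        (fromCols (Cl ⊗ₖ (1 : Matrix (Fin mr) (Fin mr) ℂ))
          ((1 : Matrix (Fin ml) (Fin ml) ℂ) ⊗ₖ Cr) *
        (fromBlocks 0 0 0 Q *
        (fromBlocks M11⁻¹ (-(M11⁻¹ * (-X) * M22⁻¹)) 0 M22⁻¹ *
        (fromBlocks 0 0 0 Q *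
        (fromRows (Bl ⊗ₖ (1 : Matrix (Fin mr) (Fin mr) ℂ))
          ((1 : Matrix (Fin ml) (Fin ml) ℂ) ⊗ₖ Br) *
          (v ⊗ₖ (1 : Matrix (Fin mr) (Fin mr) ℂ))))))) = _
    rw [Matrix.fromRows_mul, Matrix.fromBlocks_mul_fromRows, Matrix.fromBlocks_mul_fromRows,
      Matrix.fromBlocks_mul_fromRows]
    simp only [Matrix.zero_mul, Matrix.mul_zero, zero_add, add_zero]
    rw [Matrix.fromCols_mul_fromRows]
    simp only [Matrix.mul_zero, zero_add]
    rw [hM22inv, hQ]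
    simp only [← Matrix.mul_assoc]
    simp only [← Matrix.mul_kronecker_mul, Matrix.one_mul, Matrix.mul_one]
    rw [Matrix.mul_assoc (vᴴ * (v * vᴴ)), hvv, Matrix.mul_assoc vᴴ, hvv, hv,
      Matrix.mul_assoc Cr]
  rw [main, reindex_one_kron, ← Matrix.mul_assoc, add_comm]
end
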